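/- Let S be a seminormal affine monoid with cone C in characteristic p > 0. If D ⊊ C is a p-face (p divides the index [M ∩ span(D) : M_D]), then D is contained in some maximal pRUF (a relatively unsaturated p-face maximal among such). -/

import Mathlib

noncomputable section


noncomputable section

def emb (d : ℕ) : (Fin d → ℤ) →+ (Fin d → ℝ) where
  toFun m := fun i => (m i : ℝ)
  map_zero' := by ext i; simp
  map_add' x y := by ext i; simp [Pi.add_apply]

def IsFace (d : ℕ) (C D : Set (Fin d → ℝ)) : Prop :=
  ∃ u : (Fin d → ℝ) →ₗ[ℝ] ℝ, (∀ x ∈ C, 0 ≤ u x) ∧ D = {x ∈ C | u x = 0}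

def latticeOf (d : ℕ) (S : AddSubmonoid (Fin d → ℤ)) (D : Set (Fin d → ℝ)) :
    AddSubgroup (Fin d → ℤ) :=
  AddSubgroup.closure ((S : Set (Fin d → ℤ)) ∩ (emb d) ⁻¹' D)

def latIn (d : ℕ) (D : Set (Fin d → ℝ)) : AddSubgroup (Fin d → ℤ) :=
  AddSubgroup.comap (emb d) (Submodule.span ℝ D).toAddSubgroup

def IsRelSat (d : ℕ) (S : AddSubmonoid (Fin d → ℤ)) (C D : Set (Fin d → ℝ)) : Prop :=
  IsFace d C D ∧ D ≠ C ∧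
    latticeOf d S D =
      (⨅ D' ∈ {D' : Set (Fin d → ℝ) | IsFace d C D' ∧ D ⊂ D'}, latticeOf d S D') ⊓ latIn d D

def IsRUF (d : ℕ) (S : AddSubmonoid (Fin d → ℤ)) (C D : Set (Fin d → ℝ)) : Prop :=
  IsFace d C D ∧ ¬ IsRelSat d S C D

def Seminormal (d : ℕ) (S : AddSubmonoid (Fin d → ℤ)) (C : Set (Fin d → ℝ)) : Prop :=
  ∀ D : Set (Fin d → ℝ), IsFace d C D →
    ∀ m : Fin d → ℤ, emb d m ∈ intrinsicInterior ℝ D → (m ∈ S ↔ m ∈ latticeOf d S D)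

def coneOf (d : ℕ) (S : AddSubmonoid (Fin d → ℤ)) : Set (Fin d → ℝ) :=
  ↑(Submodule.span NNReal (emb d '' (S : Set (Fin d → ℤ))))

def pFace (d p : ℕ) (S : AddSubmonoid (Fin d → ℤ)) (D : Set (Fin d → ℝ)) : Prop :=
  p ∣ (latticeOf d S D).relIndex (latIn d D)

def Mtilde (d p : ℕ) (S : AddSubmonoid (Fin d → ℤ)) (D : Set (Fin d → ℝ)) : Set (Fin d → ℤ) :=
  {x | x ∈ latIn d D ∧ ∃ m : ℤ, IsCoprime m (p : ℤ) ∧ m • x ∈ latticeOf d S D}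

-- rational cast hom
def jq (d : ℕ) : (Fin d → ℤ) →+ (Fin d → ℚ) where
  toFun m := fun i => (m i : ℚ)
  map_zero' := by ext i; simp
  map_add' x y := by ext i; simp [Pi.add_apply]

lemma jq_injective (d : ℕ) : Function.Injective (jq d) := by
  intro a b h
  ext i
  have h2 : ((a i : ℚ)) = (b i : ℚ) := congrFun h i
  exact_mod_cast h2

lemma rat_span_torsion {M : Type*} [AddCommGroup M] [Module ℚ M] (s : Set M) (w : M)
    (hw : w ∈ Submodule.span ℚ s) :
    ∃ n : ℤ, n ≠ 0 ∧ n • w ∈ AddSubgroup.closure s := by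
  induction hw using Submodule.span_induction with
  | mem x hx => exact ⟨1, one_ne_zero, by simpa using AddSubgroup.subset_closure hx⟩
  | zero => exact ⟨1, one_ne_zero, by simpa using zero_mem (AddSubgroup.closure s)⟩
  | add x y hx hy ihx ihy =>
      obtain ⟨n, hn, hnx⟩ := ihx
      obtain ⟨m, hm, hmy⟩ := ihy
      refine ⟨n * m, mul_ne_zero hn hm, ?_⟩
      rw [smul_add]
      refine AddSubgroup.add_mem _ ?_ ?_
      · rw [mul_comm, mul_smul]; exact AddSubgroup.zsmul_mem _ hnx m
      · rw [mul_smul]; exact AddSubgroup.zsmul_mem _ hmy n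
  | smul q x hx ih =>
      obtain ⟨n, hn, hnx⟩ := ih
      have hden : ((q.den : ℤ)) ≠ 0 := by exact_mod_cast q.den_nz
      refine ⟨n * (q.den : ℤ), mul_ne_zero hn hden, ?_⟩
      have key : (n * (q.den : ℤ)) • (q • x) = q.num • (n • x) := by
        calc (n * (q.den : ℤ)) • (q • x)
            = ((n * (q.den : ℤ) : ℤ) : ℚ) • (q • x) := (Int.cast_smul_eq_zsmul ℚ _ _).symm
          _ = (((n * (q.den : ℤ) : ℤ) : ℚ) * q) • x := by rw [smul_smul]
          _ = ((q.num * n : ℤ) : ℚ) • x := by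
                congr 1
                push_cast
                rw [mul_assoc, Rat.den_mul_eq_num]
                ring
          _ = (q.num * n) • x := Int.cast_smul_eq_zsmul ℚ _ _
          _ = q.num • (n • x) := mul_smul _ _ _
      rw [key]
      exact AddSubgroup.zsmul_mem _ hnx q.num

lemma keyTorsion (d : ℕ) (T : Set (Fin d → ℤ)) (x : Fin d → ℤ)
    (hx : emb d x ∈ Submodule.span ℝ (emb d '' T)) :
    ∃ n : ℤ, n ≠ 0 ∧ n • x ∈ AddSubgroup.closure T := by
  by_cases h : jq d x ∈ Submodule.span ℚ (⇑(jq d) '' T)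
  · obtain ⟨n, hn, hmem⟩ := rat_span_torsion _ _ h
    refine ⟨n, hn, ?_⟩
    have h1 : jq d (n • x) ∈ AddSubgroup.closure (⇑(jq d) '' T) := by
      rw [map_zsmul]; exact hmem
    rw [← AddMonoidHom.map_closure] at h1
    obtain ⟨y, hy, hyx⟩ := h1
    rwa [← jq_injective d hyx]
  · exfalso
    set W := Submodule.span ℚ (⇑(jq d) '' T) with hW
    have hq : (Submodule.Quotient.mk (jq d x) : (Fin d → ℚ) ⧸ W) ≠ 0 := by
      simpa [Submodule.Quotient.mk_eq_zero] using h
    obtain ⟨φ, hφ⟩ : ∃ φ : Module.Dual ℚ ((Fin d → ℚ) ⧸ W),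
        φ (Submodule.Quotient.mk (jq d x)) ≠ 0 := by
      by_contra hcon
      push_neg at hcon
      exact hq ((Module.forall_dual_apply_eq_zero_iff ℚ _).mp hcon)
    set f : (Fin d → ℚ) →ₗ[ℚ] ℚ := φ.comp W.mkQ with hf
    have hfT : ∀ t ∈ T, f (jq d t) = 0 := by
      intro t ht
      have hmem : jq d t ∈ W := Submodule.subset_span (Set.mem_image_of_mem _ ht)
      have : W.mkQ (jq d t) = 0 := (Submodule.Quotient.mk_eq_zero W).2 hmem
      simp [hf, LinearMap.comp_apply, this]
    have hfx : f (jq d x) ≠ 0 := by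
      simpa [hf, LinearMap.comp_apply, Submodule.mkQ_apply] using hφ
    classical
    set F : (Fin d → ℝ) →ₗ[ℝ] ℝ :=
      ∑ i, ((f (fun j => if i = j then 1 else 0) : ℚ) : ℝ) • LinearMap.proj i with hF
    have hFm : ∀ m : Fin d → ℤ, F (emb d m) = ((f (jq d m) : ℚ) : ℝ) := by
      intro m
      rw [LinearMap.pi_apply_eq_sum_univ f (jq d m)]
      push_cast
      rw [hF]
      simp only [LinearMap.sum_apply, LinearMap.smul_apply, LinearMap.proj_apply,
        smul_eq_mul]
      refine Finset.sum_congr rfl fun i _ => ?_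
      show ((f _ : ℚ) : ℝ) * (emb d m i) = _
      simp only [emb, jq, AddMonoidHom.coe_mk, ZeroHom.coe_mk]
      push_cast
      ring
    have hker : Submodule.span ℝ (emb d '' T) ≤ LinearMap.ker F := by
      rw [Submodule.span_le]
      rintro y ⟨t, ht, rfl⟩
      simp [LinearMap.mem_ker, hFm t, hfT t ht]
    have := hker hx
    rw [LinearMap.mem_ker, hFm x] at this
    exact hfx (by exact_mod_cast this)

lemma face_subset {d : ℕ} {C D : Set (Fin d → ℝ)} (h : IsFace d C D) : D ⊆ C := by
  obtain ⟨u, hu, hD⟩ := h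
  rw [hD]
  exact fun x hx => hx.1

lemma isFace_self (d : ℕ) (C : Set (Fin d → ℝ)) : IsFace d C C :=
  ⟨0, fun x _ => le_rfl, by ext x; simp⟩

lemma emb_mem_cone {d : ℕ} {S : AddSubmonoid (Fin d → ℤ)} {s : Fin d → ℤ} (hs : s ∈ S) :
    emb d s ∈ coneOf d S :=
  Submodule.subset_span (Set.mem_image_of_mem _ hs)

lemma latticeOf_le_latIn (d : ℕ) (S : AddSubmonoid (Fin d → ℤ)) (D : Set (Fin d → ℝ)) :
    latticeOf d S D ≤ latIn d D := by
  rw [latticeOf]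
  rw [AddSubgroup.closure_le]
  rintro x ⟨hxS, hxD⟩
  show emb d x ∈ (Submodule.span ℝ D).toAddSubgroup
  exact Submodule.subset_span hxD

lemma latIn_mono {d : ℕ} {D D' : Set (Fin d → ℝ)} (h : D ⊆ D') : latIn d D ≤ latIn d D' :=
  AddSubgroup.comap_mono (Submodule.toAddSubgroup_mono (Submodule.span_mono h))

lemma span_face_le {d : ℕ} {S : AddSubmonoid (Fin d → ℤ)} {C D : Set (Fin d → ℝ)}
    (hC : C = coneOf d S) (hD : IsFace d C D) :
    (Submodule.span ℝ D : Set (Fin d → ℝ)) ⊆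
      ↑(Submodule.span ℝ (emb d '' ((S : Set (Fin d → ℤ)) ∩ (emb d) ⁻¹' D))) := by
  obtain ⟨u, hu, hDeq⟩ := hD
  have hsub : D ⊆ ↑(Submodule.span ℝ (emb d '' ((S : Set (Fin d → ℤ)) ∩ (emb d) ⁻¹' D))) := by
    intro x hx
    have hxC : x ∈ C := (hDeq ▸ hx).1
    have hux : u x = 0 := (hDeq ▸ hx).2
    rw [hC, coneOf, SetLike.mem_coe] at hxC
    obtain ⟨n, f, g, hsum⟩ := Submodule.mem_span_set'.mp hxC
    have hgC : ∀ i, (g i : Fin d → ℝ) ∈ C := by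
      intro i
      rw [hC]
      exact Submodule.subset_span (g i).2
    have hterm : ∀ i ∈ Finset.univ, (0:ℝ) ≤ (f i : ℝ) * u (g i) := by
      intro i _
      exact mul_nonneg (f i).2 (hu _ (hgC i))
    have husum : ∑ i, (f i : ℝ) * u (g i) = 0 := by
      rw [← hux, ← hsum, map_sum]
      refine Finset.sum_congr rfl fun i _ => ?_
      rw [NNReal.smul_def, map_smul, smul_eq_mul]
    have hzero := (Finset.sum_eq_zero_iff_of_nonneg hterm).mp husum
    rw [← hsum]
    refine Submodule.sum_mem _ fun i _ => ?_
    rcases eq_or_ne (f i) 0 with hfi | hfi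
    · simp [hfi]
    · have hfi' : (f i : ℝ) ≠ 0 := by exact_mod_cast hfi
      have hug : u (g i) = 0 := by
        have := hzero i (Finset.mem_univ i)
        exact (mul_eq_zero.mp this).resolve_left hfi'
      have hgD : (g i : Fin d → ℝ) ∈ D := by
        rw [hDeq]
        exact ⟨hgC i, hug⟩
      obtain ⟨s, hsS, hse⟩ := (g i).2
      have : (g i : Fin d → ℝ) ∈ emb d '' ((S : Set (Fin d → ℤ)) ∩ (emb d) ⁻¹' D) := by
        refine ⟨s, ⟨hsS, ?_⟩, hse⟩
        show emb d s ∈ D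
        rw [hse]; exact hgD
      rw [NNReal.smul_def]
      exact Submodule.smul_mem _ _ (Submodule.subset_span this)
  intro x hx
  rw [SetLike.mem_coe] at hx
  have := Submodule.span_le.mpr hsub
  exact this hx

-- generic relindex smul lemma
lemma relindex_nsmul_mem {G : Type*} [AddCommGroup G] (H K : AddSubgroup G) {y : G}
    (hy : y ∈ K) : H.relIndex K • y ∈ H := by
  have h1 := AddSubgroup.nsmul_index_mem (H.addSubgroupOf K) (⟨y, hy⟩ : K)
  rw [AddSubgroup.mem_addSubgroupOf] at h1
  simpa [AddSubgroup.relIndex] using h1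

lemma relindex_ne_zero {d : ℕ} {S : AddSubmonoid (Fin d → ℤ)} {C D : Set (Fin d → ℝ)}
    (hC : C = coneOf d S) (hD : IsFace d C D) :
    (latticeOf d S D).relIndex (latIn d D) ≠ 0 := by
  set K := latIn d D with hK
  set H := (latticeOf d S D).addSubgroupOf K with hH
  haveI : AddGroup.FG ↥K := by
    rw [← Module.Finite.iff_addGroup_fg]
    have : Module.Finite ℤ ↥(AddSubgroup.toIntSubmodule K) :=
      Module.Finite.iff_fg.mpr (IsNoetherian.noetherian _)
    exact this
  haveI : AddGroup.FG (↥K ⧸ H) := AddGroup.fg_of_surjective (QuotientAddGroup.mk'_surjective H)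
  have tor : AddMonoid.IsTorsion (↥K ⧸ H) := by
    intro q
    obtain ⟨⟨x, hxK⟩, rfl⟩ := QuotientAddGroup.mk'_surjective H q
    have hxspan : emb d x ∈ Submodule.span ℝ (D : Set (Fin d → ℝ)) := hxK
    have hx2 : emb d x ∈ Submodule.span ℝ (emb d '' ((S : Set (Fin d → ℤ)) ∩ (emb d) ⁻¹' D)) :=
      span_face_le hC hD hxspan
    obtain ⟨n, hn, hmem⟩ := keyTorsion d _ x hx2
    rw [isOfFinAddOrder_iff_nsmul_eq_zero]
    refine ⟨n.natAbs, Int.natAbs_pos.mpr hn, ?_⟩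
    have hmem' : (n.natAbs : ℤ) • x ∈ latticeOf d S D := by
      rcases Int.natAbs_eq n with h | h
      · rw [← h]; exact hmem
      · have h2 : ((n.natAbs : ℤ)) = -n := by omega
        rw [h2, neg_smul]
        exact AddSubgroup.neg_mem _ hmem
    rw [← map_nsmul]
    rw [QuotientAddGroup.mk'_apply, QuotientAddGroup.eq_zero_iff]
    rw [AddSubgroup.mem_addSubgroupOf]
    show ((n.natAbs • (⟨x, hxK⟩ : ↥K) : ↥K) : Fin d → ℤ) ∈ latticeOf d S D
    have hmem'' : n.natAbs • x ∈ latticeOf d S D := by exact_mod_cast hmem'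
    push_cast
    exact hmem''
  have hfin : Finite (↥K ⧸ H) := AddCommGroup.finite_of_fg_torsion _ tor
  show H.index ≠ 0
  rw [AddSubgroup.index]
  exact Nat.card_ne_zero.mpr ⟨⟨0⟩, hfin⟩

lemma cone_eq_span_T {d : ℕ} {S : AddSubmonoid (Fin d → ℤ)} {T : Finset (Fin d → ℤ)}
    (hT : AddSubmonoid.closure (↑T : Set (Fin d → ℤ)) = S) :
    Submodule.span NNReal (emb d '' (S : Set (Fin d → ℤ))) =
      Submodule.span NNReal (emb d '' (↑T : Set (Fin d → ℤ))) := by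
  refine le_antisymm ?_ (Submodule.span_mono (Set.image_mono (by
    rw [← hT]; exact AddSubmonoid.subset_closure)))
  rw [Submodule.span_le]
  rintro y ⟨s, hs, rfl⟩
  rw [← hT] at hs
  have h1 : emb d s ∈ AddSubmonoid.map (emb d) (AddSubmonoid.closure (↑T : Set (Fin d → ℤ))) :=
    ⟨s, hs, rfl⟩
  rw [AddMonoidHom.map_mclosure] at h1
  have h2 : AddSubmonoid.closure (⇑(emb d) '' ↑T) ≤
      (Submodule.span NNReal (emb d '' (↑T : Set (Fin d → ℤ)))).toAddSubmonoid := by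
    rw [AddSubmonoid.closure_le]
    exact Submodule.subset_span
  exact h2 h1

lemma face_repr {d : ℕ} {S : AddSubmonoid (Fin d → ℤ)} {T : Finset (Fin d → ℤ)}
    {C D : Set (Fin d → ℝ)} (hC : C = coneOf d S)
    (hT : AddSubmonoid.closure (↑T : Set (Fin d → ℤ)) = S) (hD : IsFace d C D) :
    D = ↑(Submodule.span NNReal (emb d '' {t : Fin d → ℤ | t ∈ T ∧ emb d t ∈ D})) := by
  obtain ⟨u, hu, hDeq⟩ := hD
  have hCT : C = ↑(Submodule.span NNReal (emb d '' (↑T : Set (Fin d → ℤ)))) := by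
    rw [hC, coneOf, cone_eq_span_T hT]
  apply subset_antisymm
  · -- D ⊆ span of its T-points
    intro x hx
    have hxC : x ∈ C := (hDeq ▸ hx).1
    have hux : u x = 0 := (hDeq ▸ hx).2
    rw [hCT, SetLike.mem_coe] at hxC
    obtain ⟨n, f, g, hsum⟩ := Submodule.mem_span_set'.mp hxC
    have hgC : ∀ i, (g i : Fin d → ℝ) ∈ C := by
      intro i
      rw [hCT]
      exact Submodule.subset_span (g i).2
    have hterm : ∀ i ∈ Finset.univ, (0:ℝ) ≤ (f i : ℝ) * u (g i) := fun i _ =>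
      mul_nonneg (f i).2 (hu _ (hgC i))
    have husum : ∑ i, (f i : ℝ) * u (g i) = 0 := by
      rw [← hux, ← hsum, map_sum]
      refine Finset.sum_congr rfl fun i _ => ?_
      rw [NNReal.smul_def, map_smul, smul_eq_mul]
    have hzero := (Finset.sum_eq_zero_iff_of_nonneg hterm).mp husum
    rw [SetLike.mem_coe, ← hsum]
    refine Submodule.sum_mem _ fun i _ => ?_
    rcases eq_or_ne (f i) 0 with hfi | hfi
    · simp [hfi]
    · have hfi' : (f i : ℝ) ≠ 0 := by exact_mod_cast hfi
      have hug : u (g i) = 0 :=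
        (mul_eq_zero.mp (hzero i (Finset.mem_univ i))).resolve_left hfi'
      have hgD : (g i : Fin d → ℝ) ∈ D := by rw [hDeq]; exact ⟨hgC i, hug⟩
      obtain ⟨t, htT, hte⟩ := (g i).2
      have : (g i : Fin d → ℝ) ∈ emb d '' {t : Fin d → ℤ | t ∈ T ∧ emb d t ∈ D} :=
        ⟨t, ⟨htT, by rw [hte]; exact hgD⟩, hte⟩
      exact Submodule.smul_mem _ _ (Submodule.subset_span this)
  · -- span ⊆ D
    intro x hx
    rw [SetLike.mem_coe] at hx
    induction hx using Submodule.span_induction with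
    | mem y hy =>
        obtain ⟨t, ⟨_, htD⟩, rfl⟩ := hy
        exact htD
    | zero =>
        rw [hDeq]
        constructor
        · rw [hCT]; exact Submodule.zero_mem _
        · simp
    | add y z hy hz ihy ihz =>
        rw [hDeq]
        have hyC : y ∈ C := face_subset ⟨u, hu, hDeq⟩ ihy
        have hzC : z ∈ C := face_subset ⟨u, hu, hDeq⟩ ihz
        constructor
        · rw [hCT]
          rw [hCT, SetLike.mem_coe] at hyC hzC
          exact Submodule.add_mem _ hyC hzC
        · have h1 : u y = 0 := (hDeq ▸ ihy).2
          have h2 : u z = 0 := (hDeq ▸ ihz).2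
          rw [map_add, h1, h2, add_zero]
    | smul c y hy ihy =>
        rw [hDeq]
        have hyC : y ∈ C := face_subset ⟨u, hu, hDeq⟩ ihy
        constructor
        · rw [hCT]
          rw [hCT, SetLike.mem_coe] at hyC
          exact Submodule.smul_mem _ _ hyC
        · have h1 : u y = 0 := (hDeq ▸ ihy).2
          rw [NNReal.smul_def, map_smul, h1, smul_zero]

lemma facesFinite {d : ℕ} {S : AddSubmonoid (Fin d → ℤ)} {C : Set (Fin d → ℝ)}
    (hC : C = coneOf d S) (hfg : S.FG) : {D : Set (Fin d → ℝ) | IsFace d C D}.Finite := by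
  classical
  obtain ⟨T, hT⟩ := hfg
  apply Set.Finite.subset (Set.Finite.image
    (fun s : Finset (Fin d → ℤ) => (↑(Submodule.span NNReal (emb d '' (↑s : Set (Fin d → ℤ)))) :
      Set (Fin d → ℝ))) (T.powerset : Finset (Finset (Fin d → ℤ))).finite_toSet)
  intro D hD
  refine ⟨T.filter (fun t => emb d t ∈ D),
    Finset.mem_coe.mpr (Finset.mem_powerset.mpr (Finset.filter_subset _ _)), ?_⟩
  have hset : (↑(T.filter (fun t => emb d t ∈ D)) : Set (Fin d → ℤ)) =
      {t : Fin d → ℤ | t ∈ T ∧ emb d t ∈ D} := by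
    ext t; simp [Finset.mem_filter]
  show (↑(Submodule.span NNReal (emb d '' ↑(T.filter (fun t => emb d t ∈ D)))) :
    Set (Fin d → ℝ)) = D
  rw [hset]
  exact (face_repr hC hT hD).symm

lemma latticeOf_cone_top {d : ℕ} {S : AddSubmonoid (Fin d → ℤ)} {C : Set (Fin d → ℝ)}
    (hC : C = coneOf d S)
    (hZ : AddSubgroup.closure (S : Set (Fin d → ℤ)) = ⊤) :
    latticeOf d S C = ⊤ := by
  have hsub : (S : Set (Fin d → ℤ)) ⊆ (emb d) ⁻¹' C := fun s hs => by
    show emb d s ∈ C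
    rw [hC]; exact emb_mem_cone hs
  rw [latticeOf, Set.inter_eq_left.mpr hsub, hZ]

lemma pFace_C_false {d p : ℕ} (hp : p.Prime) {S : AddSubmonoid (Fin d → ℤ)}
    {C : Set (Fin d → ℝ)} (hC : C = coneOf d S)
    (hZ : AddSubgroup.closure (S : Set (Fin d → ℤ)) = ⊤) : ¬ pFace d p S C := by
  rw [pFace, latticeOf_cone_top hC hZ, AddSubgroup.relIndex_top_left]
  intro h
  exact hp.one_lt.ne' (Nat.dvd_one.mp h)

lemma finrank_lt_of_face_ssub {d : ℕ} {C D D' : Set (Fin d → ℝ)}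
    (hD : IsFace d C D) (hD' : IsFace d C D') (hss : D ⊂ D') :
    Module.finrank ℝ (Submodule.span ℝ D) < Module.finrank ℝ (Submodule.span ℝ D') := by
  have hle : Submodule.span ℝ D ≤ Submodule.span ℝ D' := Submodule.span_mono hss.1
  rcases hle.lt_or_eq with hlt | heq
  · exact Submodule.finrank_lt_finrank_of_lt hlt
  · exfalso
    obtain ⟨u, hu, hDeq⟩ := hD
    have hker : Submodule.span ℝ D ≤ LinearMap.ker u := by
      rw [Submodule.span_le]
      intro x hx
      have : u x = 0 := (hDeq ▸ hx).2
      exact this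
    refine hss.2 fun x hx => ?_
    have hxC : x ∈ C := face_subset hD' hx
    have hxspan : x ∈ Submodule.span ℝ D := heq ▸ Submodule.subset_span hx
    have hux : u x = 0 := hker hxspan
    rw [hDeq]
    exact ⟨hxC, hux⟩

lemma exists_bigger_pface {d p : ℕ} (hp : p.Prime) {S : AddSubmonoid (Fin d → ℤ)} (hfg : S.FG)
    (hZ : AddSubgroup.closure (S : Set (Fin d → ℤ)) = ⊤)
    {C D : Set (Fin d → ℝ)} (hC : C = coneOf d S) (hD : IsFace d C D)
    (hpf : pFace d p S D) (hsat : IsRelSat d S C D) :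
    ∃ D' : Set (Fin d → ℝ), IsFace d C D' ∧ D ⊂ D' ∧ D' ≠ C ∧ pFace d p S D' := by
  by_contra hcon
  push_neg at hcon
  have hfin : {D' : Set (Fin d → ℝ) | IsFace d C D' ∧ D ⊂ D'}.Finite :=
    (facesFinite hC hfg).subset fun E hE => hE.1
  set N := ∏ E ∈ hfin.toFinset, (latticeOf d S E).relIndex (latIn d E) with hN
  have hpN : ¬ p ∣ N := by
    intro hdvd
    rw [hN, (hp.prime).dvd_finset_prod_iff _] at hdvd
    obtain ⟨E, hEmem, hpE⟩ := hdvd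
    rw [Set.Finite.mem_toFinset] at hEmem
    rcases eq_or_ne E C with rfl | hEC
    · rw [latticeOf_cone_top hC hZ, AddSubgroup.relIndex_top_left] at hpE
      exact hp.one_lt.ne' (Nat.dvd_one.mp hpE)
    · exact hcon E hEmem.1 hEmem.2 hEC hpE
  have hkey : ∀ x ∈ latIn d D, N • x ∈ latticeOf d S D := by
    intro x hx
    rw [hsat.2.2]
    refine AddSubgroup.mem_inf.mpr ⟨?_, AddSubgroup.nsmul_mem _ hx N⟩
    rw [AddSubgroup.mem_iInf]
    intro E
    rw [AddSubgroup.mem_iInf]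
    intro hE
    have hxE : x ∈ latIn d E := latIn_mono hE.2.1 hx
    obtain ⟨k, hk⟩ := Finset.dvd_prod_of_mem
      (fun E => (latticeOf d S E).relIndex (latIn d E)) (hfin.mem_toFinset.mpr hE)
    have hk' : N = (latticeOf d S E).relIndex (latIn d E) * k := hk
    rw [hk', mul_comm, mul_smul]
    exact AddSubgroup.nsmul_mem _ (relindex_nsmul_mem _ _ hxE) k
  haveI : Fact p.Prime := ⟨hp⟩
  set K := latIn d D with hK
  set H := (latticeOf d S D).addSubgroupOf K with hH
  have hne0 : (latticeOf d S D).relIndex K ≠ 0 := relindex_ne_zero hC hD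
  have hfinQ : Finite (↥K ⧸ H) := by
    have : Nat.card (↥K ⧸ H) ≠ 0 := hne0
    exact (Nat.card_ne_zero.mp this).2
  haveI := hfinQ
  haveI : Fintype (↥K ⧸ H) := Fintype.ofFinite _
  have hcard : p ∣ Fintype.card (↥K ⧸ H) := by
    rw [← Nat.card_eq_fintype_card]
    exact hpf
  obtain ⟨q, hq⟩ := exists_prime_addOrderOf_dvd_card p hcard
  obtain ⟨⟨x, hxK⟩, rfl⟩ := QuotientAddGroup.mk'_surjective H q
  have h0 : N • (QuotientAddGroup.mk' H ⟨x, hxK⟩) = 0 := by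
    rw [← map_nsmul]
    rw [QuotientAddGroup.mk'_apply, QuotientAddGroup.eq_zero_iff]
    rw [AddSubgroup.mem_addSubgroupOf]
    show ((N • (⟨x, hxK⟩ : ↥K) : ↥K) : Fin d → ℤ) ∈ latticeOf d S D
    push_cast
    exact hkey x hxK
  have hdvd : p ∣ N := hq ▸ addOrderOf_dvd_of_nsmul_eq_zero h0
  exact hpN hdvd

/-- In a seminormal affine monoid with pointed cone `C` and prime `p`: every proper
`p`-face `D ⊊ C` (i.e. `p` divides the index `[M ∩ span D : M_D]`) is contained in some
maximal pRUF (a relatively unsaturated `p`-face not properly contained in any pRUF). -/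
theorem stmt_7 (d : ℕ) (p : ℕ) (hp : p.Prime)
    (S : AddSubmonoid (Fin d → ℤ)) (hfg : S.FG)
    (hZ : AddSubgroup.closure (S : Set (Fin d → ℤ)) = ⊤)
    (C : Set (Fin d → ℝ)) (hC : C = coneOf d S)
    (hpointed : ∀ x ∈ C, -x ∈ C → x = 0)
    (hsn : Seminormal d S C)
    (D : Set (Fin d → ℝ)) (hD : IsFace d C D) (hne : D ≠ C)
    (hpf : pFace d p S D) :
    ∃ D' : Set (Fin d → ℝ), (IsRUF d S C D' ∧ pFace d p S D') ∧ D ⊆ D' ∧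
      ∀ D'' : Set (Fin d → ℝ), IsRUF d S C D'' ∧ pFace d p S D'' → ¬ D' ⊂ D'' := by
  classical
  set P := {E : Set (Fin d → ℝ) | IsFace d C E ∧ E ≠ C ∧ pFace d p S E ∧ D ⊆ E} with hP
  have hDP : D ∈ P := ⟨hD, hne, hpf, subset_rfl⟩
  set rset := (fun E : Set (Fin d → ℝ) => Module.finrank ℝ (Submodule.span ℝ E)) '' P with hr
  have hne' : rset.Nonempty := ⟨_, D, hDP, rfl⟩
  have hbdd : BddAbove rset := by
    refine ⟨Module.finrank ℝ (Fin d → ℝ), ?_⟩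
    rintro n ⟨E, _, rfl⟩
    exact Submodule.finrank_le _
  obtain ⟨E, hEP, hEr⟩ := Nat.sSup_mem hne' hbdd
  have hmax : ∀ E' ∈ P, Module.finrank ℝ (Submodule.span ℝ E') ≤
      Module.finrank ℝ (Submodule.span ℝ E) := by
    intro E' hE'
    calc Module.finrank ℝ (Submodule.span ℝ E') ≤ sSup rset := le_csSup hbdd ⟨E', hE', rfl⟩
      _ = Module.finrank ℝ (Submodule.span ℝ E) := hEr.symm
  obtain ⟨hEface, hEne, hEpf, hDE⟩ := hEP
  refine ⟨E, ⟨⟨hEface, ?_⟩, hEpf⟩, hDE, ?_⟩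
  · intro hsat
    obtain ⟨E', hE'face, hss, hE'ne, hE'pf⟩ := exists_bigger_pface hp hfg hZ hC hEface hEpf hsat
    have hmem : E' ∈ P := ⟨hE'face, hE'ne, hE'pf, hDE.trans hss.1⟩
    exact absurd (hmax E' hmem) (not_le.mpr (finrank_lt_of_face_ssub hEface hE'face hss))
  · rintro D'' ⟨⟨hface'', hnotsat⟩, hpf''⟩ hss
    have hD''ne : D'' ≠ C := by
      rintro rfl
      exact pFace_C_false hp hC hZ hpf''
    have hmem : D'' ∈ P := ⟨hface'', hD''ne, hpf'', hDE.trans hss.1⟩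
    exact absurd (hmax D'' hmem) (not_le.mpr (finrank_lt_of_face_ssub hEface hface'' hss))

end
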